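/- For every integer k ≥ 1 and every polynomial q ∈ R, ((E + n)∘(E + n + 1)∘⋯∘(E + n + k − 1))(q) = ∑_{α ∈ ℕ^n, |α| = k} (k!/(α_1!⋯α_n!)) · ∂^α (x^α · q), where (E + j)(q) denotes E(q) + j·q. -/

import Mathlib

open MvPolynomial

namespace Arrangement

variable {n : ℕ}

/-- The Euler operator `E(q) = ∑ᵢ xᵢ · ∂q/∂xᵢ`. -/
noncomputable def eulerOp (q : MvPolynomial (Fin n) ℂ) : MvPolynomial (Fin n) ℂ :=
  ∑ i, X i * pderiv i q

/-- The iterated partial derivative `∂^α = ∂₁^{α₁} ∘ ⋯ ∘ ∂ₙ^{αₙ}`. -/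
noncomputable def pdIter (α : Fin n → ℕ) : Module.End ℂ (MvPolynomial (Fin n) ℂ) :=
  (List.finRange n).foldr
    (fun i f => ((pderiv i : Derivation ℂ _ _).toLinearMap ^ α i) * f) 1

/-- The composition `(E + n) ∘ (E + n + 1) ∘ ⋯ ∘ (E + n + (k−1))`, applied to `q`. -/
noncomputable def eulerUpProd (n : ℕ) :
    ℕ → MvPolynomial (Fin n) ℂ → MvPolynomial (Fin n) ℂ
  | 0, q => q
  | k + 1, q => eulerUpProd n k (eulerOp q + ((n : MvPolynomial (Fin n) ℂ) + k) * q)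

/-! ### Auxiliary definitions -/

local notation "R" => MvPolynomial (Fin n) ℂ

/-- Partial derivative as an endomorphism. -/
noncomputable def Dp (i : Fin n) : Module.End ℂ (MvPolynomial (Fin n) ℂ) :=
  ((pderiv i : Derivation ℂ _ _).toLinearMap)

/-- Multiplication by a polynomial as an endomorphism. -/
noncomputable def Mx (p : MvPolynomial (Fin n) ℂ) : Module.End ℂ (MvPolynomial (Fin n) ℂ) :=
  LinearMap.mulLeft ℂ p

@[simp] lemma Dp_apply (i : Fin n) (q : R) : Dp i q = pderiv i q := rfl
@[simp] lemma Mx_apply (p q : R) : Mx p q = p * q := rfl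

lemma Mx_mul (p q : R) : Mx (p * q) = Mx p * Mx q := by
  ext r; simp [mul_assoc]

lemma Mx_natCast_mul (m : ℕ) (p : R) : Mx ((m : R) * p) = m • Mx p := by
  ext r; simp [Mx, mul_assoc, nsmul_eq_mul]

/-- The monomial `x^α`. -/
noncomputable def xpow (α : Fin n → ℕ) : MvPolynomial (Fin n) ℂ := ∏ i, X i ^ α i

/-- `∂^α ∘ (x^α · )` as an endomorphism. -/
noncomputable def Top (α : Fin n → ℕ) : Module.End ℂ (MvPolynomial (Fin n) ℂ) :=
  pdIter α * Mx (xpow α)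

/-- `E + n = ∑ᵢ ∂ᵢ ∘ xᵢ`. -/
noncomputable def Nop (n : ℕ) : Module.End ℂ (MvPolynomial (Fin n) ℂ) :=
  ∑ i, Dp i * Mx (X i)

/-- The right-hand side as an endomorphism. -/
noncomputable def Sop (n k : ℕ) : Module.End ℂ (MvPolynomial (Fin n) ℂ) :=
  ∑ α ∈ Finset.Nat.antidiagonalTuple n k, (Nat.multinomial Finset.univ α) • Top α

/-! ### Commutation of partial derivatives -/

lemma pderiv_comm' (i j : Fin n) (p : R) :
    pderiv i (pderiv j p) = pderiv j (pderiv i p) := by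
  induction p using MvPolynomial.induction_on' with
  | add p q hp hq => simp [hp, hq]
  | monomial s a =>
    rcases eq_or_ne i j with rfl | hij
    · rfl
    · simp only [pderiv_monomial]
      have h1 : (s - Finsupp.single j 1 : (Fin n) →₀ ℕ) i = s i := by
        simp [Finsupp.sub_apply, Finsupp.single_apply, Ne.symm hij]
      have h2 : (s - Finsupp.single i 1 : (Fin n) →₀ ℕ) j = s j := by
        simp [Finsupp.sub_apply, Finsupp.single_apply, hij]
      rw [h1, h2]
      have h3 : s - Finsupp.single j 1 - Finsupp.single i 1
          = s - Finsupp.single i 1 - Finsupp.single j 1 := tsub_right_comm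
      rw [h3]
      ring_nf

lemma commute_Dp (i j : Fin n) : Commute (Dp i) (Dp j) := by
  apply LinearMap.ext
  intro p
  exact pderiv_comm' i j p

/-! ### `pdIter` as a list product -/

/-- Product of `Dpᵢ^{αᵢ}` over a list. -/
noncomputable def prodL (l : List (Fin n)) (α : Fin n → ℕ) :
    Module.End ℂ (MvPolynomial (Fin n) ℂ) :=
  (l.map fun i => Dp i ^ α i).prod

lemma pdIter_eq (α : Fin n → ℕ) : pdIter α = prodL (List.finRange n) α := by
  rw [pdIter, prodL]
  induction (List.finRange n) with
  | nil => rfl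
  | cons a l ih => simp only [List.foldr_cons, List.map_cons, List.prod_cons, ih]; rfl

lemma commute_Dp_prodL (i : Fin n) (l : List (Fin n)) (α : Fin n → ℕ) :
    Commute (Dp i) (prodL l α) := by
  induction l with
  | nil => exact Commute.one_right _
  | cons a l ih =>
    rw [prodL, List.map_cons, List.prod_cons]
    exact ((commute_Dp i a).pow_right _).mul_right ih

lemma prodL_congr {l : List (Fin n)} {α β : Fin n → ℕ} (h : ∀ j ∈ l, α j = β j) :
    prodL l α = prodL l β := by
  unfold prodL
  congr 1
  exact List.map_congr_left fun a ha => by rw [h a ha]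

lemma prodL_add_single {l : List (Fin n)} (hl : l.Nodup) {i : Fin n} (hi : i ∈ l)
    (α : Fin n → ℕ) :
    prodL l (α + Pi.single i 1) = Dp i * prodL l α := by
  induction l with
  | nil => simp at hi
  | cons a l ih =>
    rw [List.nodup_cons] at hl
    rw [prodL, List.map_cons, List.prod_cons, prodL, List.map_cons, List.prod_cons]
    rcases List.mem_cons.mp hi with rfl | hit
    · have h1 : (α + Pi.single i 1 : Fin n → ℕ) i = α i + 1 := by simp
      have h2 : prodL l (α + Pi.single i 1) = prodL l α :=
        prodL_congr fun j hj => by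
          have hji : j ≠ i := fun h => hl.1 (h ▸ hj)
          show α j + (Pi.single i 1 : Fin n → ℕ) j = α j
          rw [Pi.single_eq_of_ne hji, add_zero]
      rw [h1, ← prodL, ← prodL, h2, pow_succ']
      rw [mul_assoc]
    · have hia : (α + Pi.single i 1 : Fin n → ℕ) a = α a := by
        have hai : a ≠ i := fun h => hl.1 (h ▸ hit)
        show α a + (Pi.single i 1 : Fin n → ℕ) a = α a
        rw [Pi.single_eq_of_ne hai, add_zero]
      rw [hia, ← prodL, ← prodL, ih hl.2 hit]
      rw [← mul_assoc, ← mul_assoc,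
        ((commute_Dp i a).pow_right (α a)).eq]

lemma pdIter_add_single (α : Fin n → ℕ) (i : Fin n) :
    pdIter (α + Pi.single i 1) = Dp i * pdIter α := by
  rw [pdIter_eq, pdIter_eq]
  exact prodL_add_single (List.nodup_finRange n) (List.mem_finRange i) α

lemma pdIter_mul_Dp (α : Fin n → ℕ) (i : Fin n) :
    pdIter α * Dp i = pdIter (α + Pi.single i 1) := by
  rw [pdIter_add_single, pdIter_eq, (commute_Dp_prodL i (List.finRange n) α).eq]

/-! ### Monomial lemmas -/

lemma xpow_add_single (α : Fin n → ℕ) (i : Fin n) :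
    xpow (α + Pi.single i 1) = X i * xpow α := by
  unfold xpow
  have hsplit : ∀ j : Fin n, (X j : R) ^ ((α + Pi.single i 1 : Fin n → ℕ) j)
      = X j ^ α j * X j ^ (Pi.single i 1 : Fin n → ℕ) j := fun j => by
    rw [Pi.add_apply, pow_add]
  rw [Finset.prod_congr rfl fun j _ => hsplit j, Finset.prod_mul_distrib]
  have : (∏ j, X j ^ (Pi.single i 1 : Fin n → ℕ) j : R) = X i := by
    rw [Finset.prod_eq_single i]
    · simp
    · intro b _ hb; rw [Pi.single_eq_of_ne hb, pow_zero]
    · intro h; exact absurd (Finset.mem_univ i) h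
  rw [this, mul_comm]

lemma pderiv_prod_zero (i : Fin n) (s : Finset (Fin n)) (h : i ∉ s) (α : Fin n → ℕ) :
    pderiv i (∏ j ∈ s, X j ^ α j : R) = 0 := by
  classical
  induction s using Finset.induction_on with
  | empty => simp
  | @insert b t hb ih =>
    rw [Finset.prod_insert hb, pderiv_mul, ih fun hit => h (Finset.mem_insert_of_mem hit)]
    have hbi : b ≠ i := fun hbi => h (hbi ▸ Finset.mem_insert_self b t)
    rw [pderiv_pow, pderiv_X_of_ne hbi]
    ring

lemma pderiv_xpow_mul_X (α : Fin n → ℕ) (i : Fin n) :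
    pderiv i (xpow α) * X i = (α i : R) * xpow α := by
  classical
  unfold xpow
  rw [← Finset.mul_prod_erase Finset.univ _ (Finset.mem_univ i), pderiv_mul,
    pderiv_prod_zero i _ (Finset.notMem_erase i _) α]
  rw [pderiv_pow, pderiv_X_self]
  set P : MvPolynomial (Fin n) ℂ := ∏ j ∈ Finset.univ.erase i, X j ^ α j with hP
  rcases Nat.eq_zero_or_pos (α i) with h0 | hpos
  · simp [h0]
  · have hpow : (X i : MvPolynomial (Fin n) ℂ) ^ (α i - 1) * X i = X i ^ α i := by
      rw [← pow_succ, Nat.sub_add_cancel hpos]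
    linear_combination ((α i : MvPolynomial (Fin n) ℂ) * P) * hpow

lemma Dp_mul_Mx (i : Fin n) (p : R) :
    Dp i * Mx p = Mx p * Dp i + Mx (pderiv i p) := by
  ext q
  simp [pderiv_mul]
  ring

/-! ### Operator identities -/

lemma Top_mul (α : Fin n → ℕ) (i : Fin n) :
    Top α * (Dp i * Mx (X i)) = Top (α + Pi.single i 1) - (α i) • Top α := by
  have hM : Mx (xpow α) * Dp i = Dp i * Mx (xpow α) - Mx (pderiv i (xpow α)) :=
    eq_sub_iff_add_eq.mpr (Dp_mul_Mx i (xpow α)).symm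
  rw [Top]
  calc pdIter α * Mx (xpow α) * (Dp i * Mx (X i))
      = pdIter α * (Mx (xpow α) * Dp i) * Mx (X i) := by noncomm_ring
    _ = pdIter α * (Dp i * Mx (xpow α) - Mx (pderiv i (xpow α))) * Mx (X i) := by rw [hM]
    _ = (pdIter α * Dp i) * (Mx (xpow α) * Mx (X i))
          - pdIter α * (Mx (pderiv i (xpow α)) * Mx (X i)) := by
        rw [mul_sub, sub_mul]; simp only [mul_assoc]
    _ = pdIter (α + Pi.single i 1) * Mx (xpow (α + Pi.single i 1))
          - pdIter α * Mx ((α i : MvPolynomial (Fin n) ℂ) * xpow α) := by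
        rw [pdIter_mul_Dp, ← Mx_mul, ← Mx_mul, pderiv_xpow_mul_X, xpow_add_single,
          mul_comm (X i : MvPolynomial (Fin n) ℂ)]
    _ = Top (α + Pi.single i 1) - (α i) • Top α := by
        rw [Mx_natCast_mul, Top, Top, mul_smul_comm]

lemma Top_mul_N (k : ℕ) (α : Fin n → ℕ) (h : ∑ i, α i = k) :
    Top α * (Nop n + k • (1 : Module.End ℂ (MvPolynomial (Fin n) ℂ)))
      = ∑ i, Top (α + Pi.single i 1) := by
  rw [Nop, mul_add, Finset.mul_sum]
  simp only [Top_mul]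
  rw [Finset.sum_sub_distrib, ← Finset.sum_smul, h, mul_smul_comm, mul_one]
  abel

/-! ### Multinomial recursion -/

lemma multinomial_succ (α : Fin n → ℕ) (i : Fin n) :
    (∑ j, α j + 1) * Nat.multinomial Finset.univ α
      = (α i + 1) * Nat.multinomial Finset.univ (α + Pi.single i 1) := by
  classical
  have hP : 0 < ∏ j, (α j).factorial := Finset.prod_pos fun _ _ => Nat.factorial_pos _
  apply Nat.eq_of_mul_eq_mul_left hP
  have hs : ∑ j, (α + Pi.single i 1 : Fin n → ℕ) j = ∑ j, α j + 1 := by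
    simp only [Pi.add_apply]
    rw [Finset.sum_add_distrib, Finset.sum_pi_single' i 1]
    simp
  have hprod : (∏ j, ((α + Pi.single i 1 : Fin n → ℕ) j).factorial)
      = (α i + 1) * ∏ j, (α j).factorial := by
    rw [← Finset.mul_prod_erase Finset.univ _ (Finset.mem_univ i),
        ← Finset.mul_prod_erase Finset.univ (fun j => (α j).factorial) (Finset.mem_univ i)]
    have h1 : ((α + Pi.single i 1 : Fin n → ℕ) i).factorial = (α i + 1) * (α i).factorial := by
      have : (α + Pi.single i 1 : Fin n → ℕ) i = α i + 1 := by simp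
      rw [this, Nat.factorial_succ]
    rw [h1, Finset.prod_congr rfl (fun j hj => by
      have hji : j ≠ i := (Finset.mem_erase.mp hj).1
      have : (α + Pi.single i 1 : Fin n → ℕ) j = α j := by
        show α j + (Pi.single i 1 : Fin n → ℕ) j = α j
        rw [Pi.single_eq_of_ne hji, add_zero]
      rw [this])]
    ring
  have h1 := Nat.multinomial_spec Finset.univ α
  have h2 := Nat.multinomial_spec Finset.univ (α + Pi.single i 1)
  rw [hs, hprod] at h2
  calc (∏ j, (α j).factorial) * ((∑ j, α j + 1) * Nat.multinomial Finset.univ α)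
      = (∑ j, α j + 1) * ((∏ j, (α j).factorial) * Nat.multinomial Finset.univ α) := by ring
    _ = (∑ j, α j + 1) * (∑ j, α j).factorial := by rw [h1]
    _ = (∑ j, α j + 1).factorial := (Nat.factorial_succ _).symm
    _ = (α i + 1) * (∏ j, (α j).factorial)
          * Nat.multinomial Finset.univ (α + Pi.single i 1) := by rw [← h2]
    _ = (∏ j, (α j).factorial)
          * ((α i + 1) * Nat.multinomial Finset.univ (α + Pi.single i 1)) := by ring

/-! ### Reindexing -/

lemma sum_reindex (F : (Fin n → ℕ) → Fin n → Module.End ℂ (MvPolynomial (Fin n) ℂ)) (k : ℕ)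
    (hF : ∀ β i, β i = 0 → F β i = 0) :
    ∑ α ∈ Finset.Nat.antidiagonalTuple n k, ∑ i, F (α + Pi.single i 1) i
      = ∑ β ∈ Finset.Nat.antidiagonalTuple n (k+1), ∑ i, F β i := by
  classical
  rw [← Finset.sum_product' (s := Finset.Nat.antidiagonalTuple n k) (t := Finset.univ),
      ← Finset.sum_product' (s := Finset.Nat.antidiagonalTuple n (k+1)) (t := Finset.univ)]
  rw [← Finset.sum_filter_of_ne
      (s := Finset.Nat.antidiagonalTuple n (k+1) ×ˢ Finset.univ)
      (p := fun p => p.1 p.2 ≠ 0) (f := fun p => F p.1 p.2)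
      (fun p _ hne h0 => hne (hF _ _ h0))]
  refine Finset.sum_nbij' (fun p => (p.1 + Pi.single p.2 1, p.2))
    (fun p => (p.1 - Pi.single p.2 1, p.2)) ?_ ?_ ?_ ?_ ?_
  · rintro ⟨α, i⟩ hp
    rw [Finset.mem_product, Finset.Nat.mem_antidiagonalTuple] at hp
    rw [Finset.mem_filter, Finset.mem_product, Finset.Nat.mem_antidiagonalTuple]
    refine ⟨⟨?_, Finset.mem_univ _⟩, ?_⟩
    · simp only [Pi.add_apply]
      rw [Finset.sum_add_distrib, Finset.sum_pi_single' i 1, if_pos (Finset.mem_univ i), hp.1]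
    · show (α + Pi.single i 1 : Fin n → ℕ) i ≠ 0
      have : (α + Pi.single i 1 : Fin n → ℕ) i = α i + 1 := by simp
      rw [this]; exact Nat.succ_ne_zero _
  · rintro ⟨β, i⟩ hp
    rw [Finset.mem_filter, Finset.mem_product, Finset.Nat.mem_antidiagonalTuple] at hp
    have hpos : 1 ≤ β i := Nat.one_le_iff_ne_zero.mpr hp.2
    have hkey : (β - Pi.single i 1 : Fin n → ℕ) + Pi.single i 1 = β := by
      funext j
      show (β j - (Pi.single i 1 : Fin n → ℕ) j) + (Pi.single i 1 : Fin n → ℕ) j = β j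
      rcases eq_or_ne j i with rfl | hji
      · rw [Pi.single_eq_same]; exact Nat.sub_add_cancel hpos
      · rw [Pi.single_eq_of_ne hji]; omega
    rw [Finset.mem_product, Finset.Nat.mem_antidiagonalTuple]
    refine ⟨?_, Finset.mem_univ _⟩
    have := congrArg (fun γ : Fin n → ℕ => ∑ j, γ j) hkey
    simp only [Pi.add_apply] at this
    rw [Finset.sum_add_distrib, Finset.sum_pi_single' i 1, if_pos (Finset.mem_univ i)] at this
    show ∑ j, (β - Pi.single i 1 : Fin n → ℕ) j = k
    have hsum : ∑ j, β j = k + 1 := hp.1.1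
    omega
  · rintro ⟨α, i⟩ _
    simp only [Prod.mk.injEq]
    refine ⟨?_, trivial⟩
    funext j
    show ((α j + (Pi.single i 1 : Fin n → ℕ) j) - (Pi.single i 1 : Fin n → ℕ) j) = α j
    omega
  · rintro ⟨β, i⟩ hp
    rw [Finset.mem_filter, Finset.mem_product] at hp
    have hpos : 1 ≤ β i := Nat.one_le_iff_ne_zero.mpr hp.2
    simp only [Prod.mk.injEq]
    refine ⟨?_, trivial⟩
    funext j
    show (β j - (Pi.single i 1 : Fin n → ℕ) j) + (Pi.single i 1 : Fin n → ℕ) j = β j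
    rcases eq_or_ne j i with rfl | hji
    · rw [Pi.single_eq_same]; exact Nat.sub_add_cancel hpos
    · rw [Pi.single_eq_of_ne hji]; omega
  · rintro ⟨α, i⟩ _
    rfl

/-! ### The main operator recursion -/

lemma Sop_mul_N (k : ℕ) :
    Sop n k * (Nop n + k • (1 : Module.End ℂ (MvPolynomial (Fin n) ℂ))) = Sop n (k + 1) := by
  classical
  have hcancel : ∀ x y : Module.End ℂ (MvPolynomial (Fin n) ℂ),
      (k+1) • x = (k+1) • y → x = y := by
    intro x y h
    have h' : ((k+1 : ℕ) : ℂ) • x = ((k+1 : ℕ) : ℂ) • y := by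
      rw [Nat.cast_smul_eq_nsmul, Nat.cast_smul_eq_nsmul]; exact h
    exact smul_right_injective _
      (show ((k+1 : ℕ) : ℂ) ≠ 0 by exact_mod_cast Nat.succ_ne_zero k) h'
  apply hcancel
  set F : (Fin n → ℕ) → Fin n → Module.End ℂ (MvPolynomial (Fin n) ℂ) :=
    fun β i => ((β i) * Nat.multinomial Finset.univ β) • Top β with hFdef
  have hF : ∀ β i, β i = 0 → F β i = 0 := fun β i h0 => by
    rw [hFdef]; simp only [h0, zero_mul, zero_smul]
  have hL : (k+1) • (Sop n k * (Nop n + k • (1 : Module.End ℂ (MvPolynomial (Fin n) ℂ))))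
      = ∑ α ∈ Finset.Nat.antidiagonalTuple n k, ∑ i, F (α + Pi.single i 1) i := by
    rw [Sop, Finset.sum_mul, Finset.smul_sum]
    refine Finset.sum_congr rfl fun α hα => ?_
    have hk : ∑ j, α j = k := Finset.Nat.mem_antidiagonalTuple.mp hα
    rw [smul_mul_assoc, Top_mul_N k α hk, Finset.smul_sum, Finset.smul_sum]
    refine Finset.sum_congr rfl fun i _ => ?_
    rw [smul_smul]
    have hmult : (k+1) * Nat.multinomial Finset.univ α
        = (α i + 1) * Nat.multinomial Finset.univ (α + Pi.single i 1) := by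
      rw [← hk]; exact multinomial_succ α i
    have hval : (α + Pi.single i 1 : Fin n → ℕ) i = α i + 1 := by simp
    rw [hmult, hFdef]
    simp only [hval]
  have hR : (k+1) • Sop n (k+1)
      = ∑ β ∈ Finset.Nat.antidiagonalTuple n (k+1), ∑ i, F β i := by
    rw [Sop, Finset.smul_sum]
    refine Finset.sum_congr rfl fun β hβ => ?_
    have hk : ∑ j, β j = k + 1 := Finset.Nat.mem_antidiagonalTuple.mp hβ
    rw [smul_smul, ← hk, Finset.sum_mul, Finset.sum_smul]
  rw [hL, hR]
  exact sum_reindex F k hF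

/-! ### Base case and assembly -/

lemma Sop_zero : Sop n 0 = 1 := by
  rw [Sop, Finset.Nat.antidiagonalTuple_zero_right, Finset.sum_singleton]
  have h1 : Nat.multinomial (Finset.univ : Finset (Fin n)) 0 = 1 := by
    simp [Nat.multinomial]
  have h2 : pdIter (0 : Fin n → ℕ) = 1 := by
    rw [pdIter_eq, prodL]
    refine List.prod_eq_one fun x hx => ?_
    rw [List.mem_map] at hx
    obtain ⟨i, _, rfl⟩ := hx
    rw [Pi.zero_apply, pow_zero]
  have h3 : xpow (0 : Fin n → ℕ) = 1 := by simp [xpow]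
  rw [Top, h1, h2, h3, one_smul, one_mul]
  ext q
  simp

lemma Nop_add_apply (k : ℕ) (q : MvPolynomial (Fin n) ℂ) :
    (Nop n + k • (1 : Module.End ℂ (MvPolynomial (Fin n) ℂ))) q
      = eulerOp q + ((n : MvPolynomial (Fin n) ℂ) + k) * q := by
  rw [LinearMap.add_apply, Nop, LinearMap.sum_apply]
  simp only [Module.End.mul_apply, Dp_apply, Mx_apply, pderiv_mul, pderiv_X_self, one_mul]
  rw [Finset.sum_add_distrib]
  rw [eulerOp]
  have h1 : ∑ _i : Fin n, q = (n : MvPolynomial (Fin n) ℂ) * q := by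
    rw [Finset.sum_const, Finset.card_univ, Fintype.card_fin, nsmul_eq_mul]
  have h2 : (k • (1 : Module.End ℂ (MvPolynomial (Fin n) ℂ))) q
      = (k : MvPolynomial (Fin n) ℂ) * q := by
    rw [LinearMap.smul_apply, Module.End.one_apply, nsmul_eq_mul]
  rw [h1, h2]
  ring

lemma eulerUpProd_eq_Sop (k : ℕ) (q : MvPolynomial (Fin n) ℂ) :
    eulerUpProd n k q = Sop n k q := by
  induction k generalizing q with
  | zero =>
    show q = Sop n 0 q
    rw [Sop_zero, Module.End.one_apply]
  | succ k ih =>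
    show eulerUpProd n k (eulerOp q + ((n : MvPolynomial (Fin n) ℂ) + k) * q) = _
    rw [← Nop_add_apply, ih, ← Module.End.mul_apply, Sop_mul_N]

end Arrangement

open Arrangement in
/-- For every `k ≥ 1` and every polynomial `q`,
`(E + n)(E + n + 1)⋯(E + n + k − 1)(q) = ∑_{|α| = k} (k!/(α₁!⋯αₙ!)) · ∂^α (x^α · q)`. -/
theorem eulerUpProd_eq_sum_multinomial
    (n : ℕ) (hn : 1 ≤ n) (k : ℕ) (hk : 1 ≤ k) (q : MvPolynomial (Fin n) ℂ) :
    eulerUpProd n k q =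
      ∑ α ∈ Finset.Nat.antidiagonalTuple n k,
        (Nat.multinomial Finset.univ α : MvPolynomial (Fin n) ℂ) *
          pdIter α ((∏ i, X i ^ α i) * q) := by
  rw [eulerUpProd_eq_Sop, Sop, LinearMap.sum_apply]
  refine Finset.sum_congr rfl fun α _ => ?_
  rw [LinearMap.smul_apply, Arrangement.Top, Module.End.mul_apply, Arrangement.Mx_apply]
  rw [nsmul_eq_mul]
  rfl
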